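/- arXiv:2309.10169 — 5 statements merged into one kernel-verified Lean document; each statement's English description precedes it below -/
import Mathlib

section
/- Let R be a Frobenius algebra with Nakayama automorphism ν. Then the class of ν in Out(R) = Aut(R)/Inn(R) lies in the center of Out(R). -/
/-- Let `R` be a Frobenius algebra with Frobenius form `lam`
(`a ↦ a ⇀ lam` bijective, `(a ⇀ lam)(s) = lam (s * a)`) and associated Nakayama
automorphism `ν` (`lam (a * r) = lam (r * ν a)`). Then the class of `ν` in
`Out(R) = Aut(R)/Inn(R)` lies in the center of `Out(R)`: for every algebra
automorphism `β` of `R`, the automorphisms `ν ∘ β` and `β ∘ ν` agree up to an inner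
automorphism. -/
theorem stmt8 (K R : Type) [Field K] [Ring R] [Algebra K R] [FiniteDimensional K R]
    (lam : Module.Dual K R)
    (hFrob : Function.Bijective fun a : R => (LinearMap.mulRight K a).dualMap lam)
    (ν : R ≃ₐ[K] R)
    (hν : ∀ a r : R, lam (a * r) = lam (r * ν a)) :
    ∀ β : R ≃ₐ[K] R, ∃ u : Rˣ, ∀ r : R, ν (β r) = ↑u⁻¹ * β (ν r) * ↑u := by
  intro β
  -- the twisted form lam' = lam ∘ β
  set lam' : Module.Dual K R := lam.comp β.toLinearMap with hlam'def
  have hlam'_apply : ∀ x, lam' x = lam (β x) := fun x => rfl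
  -- lam' is also a Frobenius form
  have hg : Function.Bijective fun a : R => (LinearMap.mulRight K a).dualMap lam' := by
    have hcomp : (fun a : R => (LinearMap.mulRight K a).dualMap lam')
        = (β.toLinearEquiv.dualMap : Module.Dual K R → Module.Dual K R)
          ∘ (fun a : R => (LinearMap.mulRight K a).dualMap lam) ∘ β := by
      funext a
      ext x
      show lam' (x * a) = _
      simp [hlam'_apply, map_mul]
    rw [hcomp]
    exact β.toLinearEquiv.dualMap.bijective.comp (hFrob.comp β.bijective)
  -- injectivity criteria
  have hinj : ∀ b b' : R, (∀ x, lam (x * b) = lam (x * b')) → b = b' := by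
    intro b b' h
    apply hFrob.injective
    ext x
    exact h x
  have hinj' : ∀ b b' : R, (∀ x, lam' (x * b) = lam' (x * b')) → b = b' := by
    intro b b' h
    apply hg.injective
    ext x
    exact h x
  -- the unit relating lam and lam'
  obtain ⟨d, hd⟩ := hFrob.surjective lam'
  have hd' : ∀ x, lam (x * d) = lam (β x) := by
    intro x
    have := DFunLike.congr_fun hd x
    simpa [hlam'_apply] using this
  obtain ⟨e, he⟩ := hg.surjective lam
  have he' : ∀ x, lam (β (x * e)) = lam x := by
    intro x
    have := DFunLike.congr_fun he x
    simpa [hlam'_apply] using this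
  have hed : e * d = 1 := by
    apply hinj
    intro x
    calc lam (x * (e * d)) = lam ((x * e) * d) := by rw [mul_assoc]
      _ = lam (β (x * e)) := hd' _
      _ = lam x := he' x
      _ = lam (x * 1) := by rw [mul_one]
  have hde : d * e = 1 := by
    apply hinj'
    intro x
    calc lam' (x * (d * e)) = lam (β ((x * d) * e)) := by rw [mul_assoc, hlam'_apply]
      _ = lam (x * d) := he' _
      _ = lam (β x) := hd' x
      _ = lam' (x * 1) := by rw [mul_one, hlam'_apply]
  -- Nakayama of lam' is β⁻¹ ∘ ν ∘ β, and it equals conjugation of ν by d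
  have key : ∀ a : R, β.symm (ν (β a)) = d * ν a * e := by
    intro a
    apply hinj'
    intro r
    have lhs : lam' (r * β.symm (ν (β a))) = lam (β (a * r)) := by
      rw [hlam'_apply, map_mul β, AlgEquiv.apply_symm_apply, ← hν, ← map_mul]
    have rhs : lam' (r * (d * ν a * e)) = lam (β (a * r)) := by
      rw [hlam'_apply]
      have h1 : r * (d * ν a * e) = ((r * d) * ν a) * e := by
        simp only [mul_assoc]
      rw [h1, he', ← hν, ← mul_assoc, hd', map_mul]
    rw [lhs, rhs]
  -- assemble the unit
  refine ⟨⟨β e, β d, by rw [← map_mul, hed, map_one], by rw [← map_mul, hde, map_one]⟩, ?_⟩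
  intro r
  have h := congrArg β (key r)
  rw [AlgEquiv.apply_symm_apply, map_mul, map_mul] at h
  simpa using h
end

section
/- Let K be a field, q ∈ K*, and R_q = K⟨x,y⟩/(x², y², yx − qxy). Let ν be the automorphism with ν(x) = q^{-1}x, ν(y) = qy. If t is a positive integer with q^t ≠ 1, then ν^t is not an inner automorphism of R_q. Consequently, the order of [R_q*] in Pic(R_q) equals the multiplicative order of q in K* (infinite if q is not a root of unity). -/
/-- Let `K` be a field, `q ∈ K*`, `R_q = K⟨x,y⟩/(x², y², yx − qxy)` (a
4-dimensional algebra with basis `{1, x, y, xy}`), and let `ν` be the (Nakayama)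
automorphism with `ν x = q⁻¹ • x`, `ν y = q • y`. If `t` is a positive integer with
`q^t ≠ 1`, then `ν^t` is not an inner automorphism of `R_q`; and conversely `ν^t` is
inner when `q^t = 1`. Consequently the order of `[R_q*]` in `Pic(R_q)` — which equals
the order of the class of `ν` in `Out(R_q)` — is the multiplicative order of `q`
(infinite if `q` is not a root of unity). -/
theorem stmt10 (K : Type) [Field K] (q : K) (hq : q ≠ 0)
    (R : Type) [Ring R] [Algebra K R]
    (x y : R) (hx : x * x = 0) (hy : y * y = 0) (hyx : y * x = q • (x * y))
    (b : Module.Basis (Fin 4) K R)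
    (hb0 : b 0 = 1) (hb1 : b 1 = x) (hb2 : b 2 = y) (hb3 : b 3 = x * y)
    (ν : R ≃ₐ[K] R) (hνx : ν x = q⁻¹ • x) (hνy : ν y = q • y) :
    ∀ t : ℕ, 0 < t →
      ((∃ u : Rˣ, ∀ r : R, (ν ^ t) r = ↑u⁻¹ * r * ↑u) ↔ q ^ t = 1) := by
  -- basic multiplication facts
  have hx_xy : x * (x * y) = 0 := by rw [← mul_assoc, hx, zero_mul]
  have hxy_x : (x * y) * x = 0 := by
    rw [mul_assoc, hyx, mul_smul_comm, hx_xy, smul_zero]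
  have hxy_y : (x * y) * y = 0 := by rw [mul_assoc, hy, mul_zero]
  have hy_xy : y * (x * y) = 0 := by
    rw [← mul_assoc, hyx, smul_mul_assoc, hxy_y, smul_zero]
  have hxy_xy : (x * y) * (x * y) = 0 := by rw [mul_assoc, hy_xy, mul_zero]
  -- powers of ν on x and y
  have hpx : ∀ n : ℕ, (ν ^ n) x = (q⁻¹) ^ n • x := by
    intro n
    induction n with
    | zero => simp
    | succ n ih =>
        rw [pow_succ', AlgEquiv.mul_apply, ih, map_smul, hνx, smul_smul, ← pow_succ]
  have hpy : ∀ n : ℕ, (ν ^ n) y = q ^ n • y := by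
    intro n
    induction n with
    | zero => simp
    | succ n ih =>
        rw [pow_succ', AlgEquiv.mul_apply, ih, map_smul, hνy, smul_smul, ← pow_succ]
  -- coefficient comparison
  have key : ∀ c d : Fin 4 → K,
      (c 0 • (1 : R) + c 1 • x + c 2 • y + c 3 • (x * y) =
        d 0 • (1 : R) + d 1 • x + d 2 • y + d 3 • (x * y)) → c = d := by
    intro c d h
    have h' : (∑ i, c i • b i) = ∑ i, d i • b i := by
      rw [Fin.sum_univ_four, Fin.sum_univ_four, hb0, hb1, hb2, hb3]
      exact h
    rw [← b.repr_sum_self c, ← b.repr_sum_self d, h']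
  intro t ht
  constructor
  · rintro ⟨u, hu⟩
    by_contra hqt
    -- from the inner condition, get u * (ν^t r) = r * u
    have hcomm : ∀ r : R, (u : R) * (ν ^ t) r = r * (u : R) := by
      intro r
      rw [hu r, ← mul_assoc, ← mul_assoc, Units.mul_inv, one_mul]
    set A := b.repr (u : R) 0 with hA
    set B := b.repr (u : R) 1 with hB
    set C := b.repr (u : R) 2 with hC
    set D := b.repr (u : R) 3 with hD
    have hurep : (u : R) = A • 1 + B • x + C • y + D • (x * y) := by
      have := b.sum_repr (u : R)
      rw [Fin.sum_univ_four, hb0, hb1, hb2, hb3] at this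
      exact this.symm
    -- equation from y
    have e1 : (u : R) * (q ^ t • y) = y * (u : R) := by
      rw [← hpy t]; exact hcomm y
    have e1' : (q ^ t * A) • y + (0 : K) • (1 : R) + (q ^ t * B) • (x * y) + (0:K) • x =
        A • y + (0:K) • (1 : R) + (q * B) • (x * y) + (0:K) • x := by
      calc (q ^ t * A) • y + (0 : K) • (1 : R) + (q ^ t * B) • (x * y) + (0:K) • x
          = q ^ t • ((A • 1 + B • x + C • y + D • (x * y)) * y)
            + (q ^ t * C) • (y * y) + (q ^ t * D) • ((x * y) * y) := by
            rw [hy, hxy_y]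
            simp only [add_mul, smul_mul_assoc, one_mul, smul_zero, add_zero, hy, hxy_y]
            module
        _ = q ^ t • ((u:R) * y) := by rw [hy, hxy_y, smul_zero, smul_zero, add_zero,
            add_zero, ← hurep]
        _ = (u : R) * (q ^ t • y) := by rw [mul_smul_comm]
        _ = y * (u : R) := e1
        _ = y * (A • 1 + B • x + C • y + D • (x * y)) := by rw [← hurep]
        _ = A • y + (0:K) • (1 : R) + (q * B) • (x * y) + (0:K) • x := by
            simp only [mul_add, mul_smul_comm, mul_one, hy, hyx, hy_xy, smul_zero,
              smul_smul]
            module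
    have hcoef := key ![0, 0, q ^ t * A, q ^ t * B] ![0, 0, A, q * B] (by
      show (0:K) • (1 : R) + (0:K) • x + (q ^ t * A) • y + (q ^ t * B) • (x * y)
          = (0:K) • (1 : R) + (0:K) • x + A • y + (q * B) • (x * y)
      calc (0:K) • (1 : R) + (0:K) • x + (q ^ t * A) • y + (q ^ t * B) • (x * y)
          = (q ^ t * A) • y + (0 : K) • (1 : R) + (q ^ t * B) • (x * y) + (0:K) • x := by
            module
        _ = A • y + (0:K) • (1 : R) + (q * B) • (x * y) + (0:K) • x := e1'
        _ = (0:K) • (1 : R) + (0:K) • x + A • y + (q * B) • (x * y) := by module)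
    have hAeq : q ^ t * A = A := by
      have := congrFun hcoef 2
      simpa using this
    have hA0 : A = 0 := by
      by_contra h0
      exact hqt (mul_right_cancel₀ h0 (by rw [hAeq, one_mul]))
    -- now u is nilpotent
    have hu2 : (u : R) * (u : R) = (B * C + C * B * q) • (x * y) := by
      rw [hurep, hA0]
      simp only [zero_smul, zero_add, add_mul, mul_add, smul_mul_smul_comm, hx, hy,
        hyx, hx_xy, hxy_x, hxy_y, hy_xy, hxy_xy, smul_zero, add_zero, zero_add,
        smul_smul]
      module
    have hu3 : (u : R) * (u : R) * (u : R) = 0 := by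
      rw [hu2, hurep, hA0]
      simp only [zero_smul, zero_add, smul_mul_assoc, mul_add, mul_smul_comm,
        hxy_x, hxy_y, hxy_xy, smul_zero, add_zero, zero_add]
    have hone : (1 : R) = 0 := by
      have hval : ((u ^ 3 : Rˣ) : R) = 0 := by
        rw [Units.val_pow_eq_pow_val, pow_succ, pow_two]
        exact hu3
      calc (1 : R) = ↑((u ^ 3)⁻¹ * (u ^ 3)) := by rw [inv_mul_cancel]; rfl
        _ = ↑(u ^ 3)⁻¹ * ((u ^ 3 : Rˣ) : R) := rfl
        _ = ↑(u ^ 3)⁻¹ * (0 : R) := by rw [hval]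
        _ = 0 := mul_zero _
    have := b.ne_zero 0
    rw [hb0, hone] at this
    exact this rfl
  · intro hqt
    refine ⟨1, fun r => ?_⟩
    have hid : (ν ^ t) r = r := by
      have hr := b.sum_repr r
      rw [Fin.sum_univ_four, hb0, hb1, hb2, hb3] at hr
      rw [← hr, map_add, map_add, map_add, map_smul, map_smul, map_smul, map_smul,
        map_one, map_mul, hpx t, hpy t, inv_pow, hqt, inv_one, one_smul, one_smul]
    simp [hid]
end

section
/- Let R be a finite dimensional K-algebra and ψ : R* ⊗_R R* → R an associative morphism of R-bimodules. Then the semitrivial extension A = R ⋉_ψ R* is a symmetric algebra: the map Φ : A → A*, Φ(r, r*)(s, s*) = r*(s) + s*(r), is an isomorphism of A-bimodules. -/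
/-- The multiplication of the semitrivial extension `R ⋉_ψ R*`:
`(r, f)(s, g) = (r s + ψ(f ⊗ g), r ⇀ g + f ↼ s)`, where the bimodule morphism
`ψ : R* ⊗_R R* → R` is encoded by the balanced bilinear pairing `p`, and
`(r ⇀ g)(t) = g (t * r)`, `(f ↼ s)(t) = f (s * t)`. -/
def stMul (K R : Type) [Field K] [Ring R] [Algebra K R]
    (p : Module.Dual K R →ₗ[K] Module.Dual K R →ₗ[K] R)
    (a b : R × Module.Dual K R) : R × Module.Dual K R :=
  (a.1 * b.1 + p a.2 b.2,
    (LinearMap.mulRight K a.1).dualMap b.2 + (LinearMap.mulLeft K b.1).dualMap a.2)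

/-- The map `Φ : A → A*`, `Φ(r, f)(s, g) = f s + g r`, for `A = R ⋉_ψ R*`. -/
def Phi (K R : Type) [Field K] [Ring R] [Algebra K R]
    (a : R × Module.Dual K R) : Module.Dual K (R × Module.Dual K R) where
  toFun b := a.2 b.1 + b.2 a.1
  map_add' b c := by
    simp only [Prod.fst_add, Prod.snd_add, map_add, LinearMap.add_apply]
    ring
  map_smul' k b := by
    simp only [Prod.smul_fst, Prod.smul_snd, map_smul, LinearMap.smul_apply,
      smul_eq_mul, RingHom.id_apply]
    ring

/-- Let `R` be a finite dimensional algebra and `ψ : R* ⊗_R R* → R` an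
associative morphism of `R`-bimodules (encoded by the pairing `p` as in the
hypotheses). Then the semitrivial extension `A = R ⋉_ψ R*` is a symmetric algebra:
the map `Φ : A → A*`, `Φ(r, f)(s, g) = f s + g r`, is an isomorphism of `A`-bimodules,
i.e. it is additive, bijective, and satisfies `Φ(x · a) = x ⇀ Φ(a)` and
`Φ(a · x) = Φ(a) ↼ x` (written pointwise using the multiplication `stMul` of `A`). -/
theorem stmt12 (K R : Type) [Field K] [Ring R] [Algebra K R] [FiniteDimensional K R]
    (p : Module.Dual K R →ₗ[K] Module.Dual K R →ₗ[K] R)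
    (hbal : ∀ (r : R) (f g : Module.Dual K R),
      p ((LinearMap.mulLeft K r).dualMap f) g = p f ((LinearMap.mulRight K r).dualMap g))
    (hleft : ∀ (r : R) (f g : Module.Dual K R),
      p ((LinearMap.mulRight K r).dualMap f) g = r * p f g)
    (hright : ∀ (f g : Module.Dual K R) (r : R),
      p f ((LinearMap.mulLeft K r).dualMap g) = p f g * r)
    (hassoc : ∀ (f g h : Module.Dual K R) (s : R), h (s * p f g) = f (p g h * s)) :
    (∀ a b : R × Module.Dual K R, Phi K R (a + b) = Phi K R a + Phi K R b) ∧
    Function.Bijective (Phi K R) ∧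
    (∀ x a b : R × Module.Dual K R,
      Phi K R (stMul K R p x a) b = Phi K R a (stMul K R p b x)) ∧
    (∀ a x b : R × Module.Dual K R,
      Phi K R (stMul K R p a x) b = Phi K R a (stMul K R p x b)) := by

  have hPhi : ∀ a b : R × Module.Dual K R, Phi K R a b = a.2 b.1 + b.2 a.1 := fun a b => rfl
  have hadd : ∀ a b : R × Module.Dual K R, Phi K R (a + b) = Phi K R a + Phi K R b := by
    intro a b
    apply LinearMap.ext; intro c
    simp [hPhi]
    ring
  refine ⟨hadd, ?_, ?_, ?_⟩
  · -- Bijectivity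
    let Φ : (R × Module.Dual K R) →ₗ[K] Module.Dual K (R × Module.Dual K R) :=
      { toFun := Phi K R
        map_add' := hadd
        map_smul' := by
          intro k a
          apply LinearMap.ext; intro c
          simp [hPhi]
          ring }
    have hinj : Function.Injective Φ := by
      rw [← LinearMap.ker_eq_bot, LinearMap.ker_eq_bot']
      intro a ha
      have h1 : a.1 = 0 := by
        rw [← Module.forall_dual_apply_eq_zero_iff K]
        intro g
        have := congrFun (congrArg (fun f => f.toFun) ha) (0, g)
        simpa [Φ, hPhi] using this
      have h2 : a.2 = 0 := by
        ext s
        have := congrFun (congrArg (fun f => f.toFun) ha) (s, 0)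
        simpa [Φ, hPhi] using this
      exact Prod.ext h1 h2
    have hfr : Module.finrank K (R × Module.Dual K R)
        = Module.finrank K (Module.Dual K (R × Module.Dual K R)) :=
      (Subspace.dual_finrank_eq).symm
    have := (LinearMap.injective_iff_surjective_of_finrank_eq_finrank hfr).mp hinj
    exact ⟨hinj, this⟩
  · intro x a b
    simp only [hPhi, stMul, Prod.fst, Prod.snd, map_add, LinearMap.add_apply,
      LinearMap.dualMap_apply', LinearMap.comp_apply, LinearMap.mulRight_apply,
      LinearMap.mulLeft_apply]
    have key : b.2 (p x.2 a.2) = a.2 (p b.2 x.2) := by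
      have := hassoc b.2 x.2 a.2 1
      simpa using this.symm
    rw [key]; ring
  · intro a x b
    simp only [hPhi, stMul, Prod.fst, Prod.snd, map_add, LinearMap.add_apply,
      LinearMap.dualMap_apply', LinearMap.comp_apply, LinearMap.mulRight_apply,
      LinearMap.mulLeft_apply]
    have key : b.2 (p a.2 x.2) = a.2 (p x.2 b.2) := by
      have := hassoc a.2 x.2 b.2 1
      simpa using this
    rw [key]; ring
end

section
/- Let R be a finite dimensional algebra such that R* ⊗_R R* ≅ R as R-bimodules. If some isomorphism of R-bimodules ψ : R* ⊗_R R* → R is associative (ψ(r*⊗s*) ⇀ t* = r* ↼ ψ(s*⊗t*)), then every R-bimodule isomorphism R* ⊗_R R* → R is associative. -/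
/-- Let `R` be a finite dimensional algebra with `R* ⊗_R R* ≅ R` as
`R`-bimodules. The isomorphism is encoded by a balanced bilinear pairing `p₀`
(corresponding to a bimodule morphism `ψ₀ : R* ⊗_R R* → R`) which is a morphism of
left and right modules and satisfies the universal property of the tensor product
(so the induced map `R* ⊗_R R* → R` is bijective). If `ψ₀` is associative, then every
`R`-bimodule isomorphism `R* ⊗_R R* → R` is associative; every such isomorphism is of
the form `e ∘ ψ₀` for a bijective linear map `e : R → R` compatible with the bimodule
structure on the image of `p₀`, and the conclusion states that all such compositions
are associative. Here `(a ⇀ f)(s) = f (s * a)` and `(f ↼ a)(s) = f (a * s)`. -/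
theorem stmt14 (K R : Type) [Field K] [Ring R] [Algebra K R] [FiniteDimensional K R]
    (p₀ : Module.Dual K R →ₗ[K] Module.Dual K R →ₗ[K] R)
    (hbal : ∀ (r : R) (f g : Module.Dual K R),
      p₀ ((LinearMap.mulLeft K r).dualMap f) g = p₀ f ((LinearMap.mulRight K r).dualMap g))
    (hleft : ∀ (r : R) (f g : Module.Dual K R),
      p₀ ((LinearMap.mulRight K r).dualMap f) g = r * p₀ f g)
    (hright : ∀ (f g : Module.Dual K R) (r : R),
      p₀ f ((LinearMap.mulLeft K r).dualMap g) = p₀ f g * r)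
    (huniv : ∀ (M : Type) [AddCommGroup M] [Module K M]
        (b : Module.Dual K R →ₗ[K] Module.Dual K R →ₗ[K] M),
        (∀ (r : R) (f g : Module.Dual K R),
          b ((LinearMap.mulLeft K r).dualMap f) g
            = b f ((LinearMap.mulRight K r).dualMap g)) →
        ∃! h : R →ₗ[K] M, ∀ f g : Module.Dual K R, b f g = h (p₀ f g))
    (hassoc : ∀ (f g h : Module.Dual K R) (s : R), h (s * p₀ f g) = f (p₀ g h * s)) :
    ∀ e : R →ₗ[K] R, Function.Bijective e →
      (∀ (r : R) (f g : Module.Dual K R), e (r * p₀ f g) = r * e (p₀ f g)) →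
      (∀ (f g : Module.Dual K R) (r : R), e (p₀ f g * r) = e (p₀ f g) * r) →
      ∀ (f g h : Module.Dual K R) (s : R), h (s * e (p₀ f g)) = f (e (p₀ g h) * s) := by
  intro e he heL heR f g h s
  set S : Submodule K R := Submodule.span K {y | ∃ f g, p₀ f g = y} with hSdef
  have hS : S = ⊤ := by
    obtain ⟨h', hh', uniq⟩ := huniv (R ⧸ S) 0 (by intro r f g; simp)
    have h1 : S.mkQ = h' := by
      apply uniq
      intro f g
      simp only [LinearMap.zero_apply, Submodule.mkQ_apply]
      exact ((Submodule.Quotient.mk_eq_zero S).mpr (Submodule.subset_span ⟨f, g, rfl⟩)).symm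
    have h2 : (0 : R →ₗ[K] R ⧸ S) = h' := by apply uniq; intro f g; simp
    rw [← h2] at h1
    rw [eq_top_iff]
    intro x _
    have := LinearMap.congr_fun h1 x
    simpa [Submodule.Quotient.mk_eq_zero] using this
  have hmem : ∀ x : R, x ∈ S := fun x => hS ▸ Submodule.mem_top
  have heL' : ∀ (r x : R), e (r * x) = r * e x := by
    intro r x
    refine Submodule.span_induction ?_ ?_ ?_ ?_ (hmem x)
    · rintro y ⟨f, g, rfl⟩; exact heL r f g
    · simp
    · intro a b _ _ ha hb; rw [mul_add, map_add, ha, hb, map_add, mul_add]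
    · intro k a _ ha; rw [mul_smul_comm, map_smul, ha, map_smul, mul_smul_comm]
  have heR' : ∀ (x r : R), e (x * r) = e x * r := by
    intro x r
    refine Submodule.span_induction ?_ ?_ ?_ ?_ (hmem x)
    · rintro y ⟨f, g, rfl⟩; exact heR f g r
    · simp
    · intro a b _ _ ha hb; rw [add_mul, map_add, ha, hb, map_add, add_mul]
    · intro k a _ ha; rw [smul_mul_assoc, map_smul, ha, map_smul, smul_mul_assoc]
  have hcL : ∀ x : R, e x = e 1 * x := by intro x; simpa using heR' 1 x
  have hcR : ∀ x : R, e x = x * e 1 := by intro x; simpa using heL' x 1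
  have hcomm : ∀ x : R, e 1 * x = x * e 1 := fun x => (hcL x).symm.trans (hcR x)
  calc h (s * e (p₀ f g)) = h ((s * e 1) * p₀ f g) := by
        rw [hcL (p₀ f g), mul_assoc]
    _ = f (p₀ g h * (s * e 1)) := hassoc f g h (s * e 1)
    _ = f (e (p₀ g h) * s) := by
        rw [hcR (p₀ g h), mul_assoc, hcomm s]
end

section
/- Let R be a Frobenius algebra such that R* ⊗_R R* ≅ R as R-bimodules (equivalently, the class [R*] has order at most 2 in Pic(R)). Then every R-bimodule isomorphism ψ : R* ⊗_R R* → R is associative, i.e., ψ(r*⊗s*) ⇀ t* = r* ↼ ψ(s*⊗t*) for all r*, s*, t* ∈ R*. -/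
namespace Stmt16Aux

variable (K R : Type) [Field K] [Ring R] [Algebra K R]

/-- `a ↦ (r ↦ lam (a * r))`, i.e. `a ↦ lam ↼ a`. -/
def Ll (lam : Module.Dual K R) : R →ₗ[K] Module.Dual K R where
  toFun a := (LinearMap.mulLeft K a).dualMap lam
  map_add' a b := by ext r; simp [add_mul]
  map_smul' c a := by ext r; simp [smul_mul_assoc]

@[simp] lemma Ll_apply (lam : Module.Dual K R) (a r : R) :
    Ll K R lam a r = lam (a * r) := rfl

/-- `a ↦ (r ↦ lam (r * a))`, i.e. `a ↦ a ⇀ lam`. -/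
def Lr (lam : Module.Dual K R) : R →ₗ[K] Module.Dual K R where
  toFun a := (LinearMap.mulRight K a).dualMap lam
  map_add' a b := by ext r; simp [mul_add]
  map_smul' c a := by ext r; simp [mul_smul_comm]

@[simp] lemma Lr_apply (lam : Module.Dual K R) (a r : R) :
    Lr K R lam a r = lam (r * a) := rfl

end Stmt16Aux

open Stmt16Aux in
/-- Let `R` be a Frobenius algebra (there is a Frobenius form `lam`, i.e.
`a ↦ a ⇀ lam` is bijective) such that `R* ⊗_R R* ≅ R` as `R`-bimodules — equivalently
`[R*]` has order at most 2 in `Pic(R)`. The isomorphism is encoded by a balanced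
bilinear pairing `p₀` which is a morphism of left and right modules and satisfies the
universal property of the tensor product. Then every `R`-bimodule isomorphism
`ψ : R* ⊗_R R* → R` is associative: `p₀` itself is associative, and so is `e ∘ p₀` for
every bijective linear `e : R → R` compatible with the bimodule structure (every
bimodule isomorphism arises this way). Here `(a ⇀ f)(s) = f (s * a)`,
`(f ↼ a)(s) = f (a * s)`. -/
theorem stmt16 (K R : Type) [Field K] [Ring R] [Algebra K R] [FiniteDimensional K R]
    (lam : Module.Dual K R)
    (hFrob : Function.Bijective fun a : R => (LinearMap.mulRight K a).dualMap lam)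
    (p₀ : Module.Dual K R →ₗ[K] Module.Dual K R →ₗ[K] R)
    (hbal : ∀ (r : R) (f g : Module.Dual K R),
      p₀ ((LinearMap.mulLeft K r).dualMap f) g = p₀ f ((LinearMap.mulRight K r).dualMap g))
    (hleft : ∀ (r : R) (f g : Module.Dual K R),
      p₀ ((LinearMap.mulRight K r).dualMap f) g = r * p₀ f g)
    (hright : ∀ (f g : Module.Dual K R) (r : R),
      p₀ f ((LinearMap.mulLeft K r).dualMap g) = p₀ f g * r)
    (huniv : ∀ (M : Type) [AddCommGroup M] [Module K M]
        (b : Module.Dual K R →ₗ[K] Module.Dual K R →ₗ[K] M),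
        (∀ (r : R) (f g : Module.Dual K R),
          b ((LinearMap.mulLeft K r).dualMap f) g
            = b f ((LinearMap.mulRight K r).dualMap g)) →
        ∃! h : R →ₗ[K] M, ∀ f g : Module.Dual K R, b f g = h (p₀ f g)) :
    (∀ (f g h : Module.Dual K R) (s : R), h (s * p₀ f g) = f (p₀ g h * s)) ∧
    (∀ e : R →ₗ[K] R, Function.Bijective e →
      (∀ (r : R) (f g : Module.Dual K R), e (r * p₀ f g) = r * e (p₀ f g)) →
      (∀ (f g : Module.Dual K R) (r : R), e (p₀ f g * r) = e (p₀ f g) * r) →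
      ∀ (f g h : Module.Dual K R) (s : R),
        h (s * e (p₀ f g)) = f (e (p₀ g h) * s)) := by
  classical
  have hLrbij : Function.Bijective (Lr K R lam) := hFrob
  -- `Ll` is injective, hence bijective
  have hLlinj : Function.Injective (Ll K R lam) := by
    rw [injective_iff_map_eq_zero]
    intro a ha
    rw [← Module.forall_dual_apply_eq_zero_iff K a]
    intro φ
    obtain ⟨x, hx⟩ := hLrbij.2 φ
    rw [← hx]
    show lam (a * x) = 0
    simpa using LinearMap.congr_fun ha x
  have hLlbij : Function.Bijective (Ll K R lam) :=
    ⟨hLlinj, (LinearMap.injective_iff_surjective_of_finrank_eq_finrank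
      (Subspace.dual_finrank_eq).symm).mp hLlinj⟩
  let eL : R ≃ₗ[K] Module.Dual K R := LinearEquiv.ofBijective _ hLlbij
  let eR : R ≃ₗ[K] Module.Dual K R := LinearEquiv.ofBijective _ hLrbij
  let νE : R ≃ₗ[K] R := eR.trans eL.symm
  set ν : R → R := fun a => νE a with hνdef
  -- Nakayama identities
  have hLlν : ∀ a r, lam (ν a * r) = lam (r * a) := by
    intro a r
    have h1 : eL (νE a) = eR a := by
      simp [νE, LinearEquiv.trans_apply, LinearEquiv.apply_symm_apply]
    have h2 := congrArg (fun φ : Module.Dual K R => φ r) h1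
    simpa [eL, eR, LinearEquiv.ofBijective_apply] using h2
  have hLlνF : ∀ c, Ll K R lam (ν c) = Lr K R lam c := by
    intro c; ext r; simpa using hLlν c r
  have N : ∀ u v : R, lam (u * v) = lam (ν v * u) := fun u v => (hLlν v u).symm
  have llinj : ∀ a b : R, (∀ r, lam (a * r) = lam (b * r)) → a = b := by
    intro a b hab
    apply hLlinj
    ext r
    simpa using hab r
  have νmul : ∀ a b, ν (a * b) = ν a * ν b := by
    intro a b
    apply llinj
    intro r
    calc lam (ν (a * b) * r) = lam (r * (a * b)) := hLlν _ _
      _ = lam ((r * a) * b) := by rw [mul_assoc]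
      _ = lam (ν b * (r * a)) := N _ _
      _ = lam ((ν b * r) * a) := by rw [mul_assoc]
      _ = lam (ν a * (ν b * r)) := N _ _
      _ = lam ((ν a * ν b) * r) := by rw [mul_assoc]
  have νone : ν 1 = 1 := by
    apply llinj
    intro r
    rw [hLlν, mul_one, one_mul]
  have lamν : ∀ a, lam (ν a) = lam a := by
    intro a
    have := hLlν a 1
    simpa using this
  have νsurj : Function.Surjective ν := νE.surjective
  set e₀ : R := p₀ lam lam with he₀
  -- key formula for p₀
  have hP : ∀ a b : R, p₀ (Ll K R lam a) (Lr K R lam b) = e₀ * ν (a * b) := by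
    intro a b
    have h2 : (LinearMap.mulRight K a).dualMap (Lr K R lam b) = Lr K R lam (a * b) := by
      ext r
      simp [mul_assoc]
    calc p₀ (Ll K R lam a) (Lr K R lam b)
        = p₀ lam ((LinearMap.mulRight K a).dualMap (Lr K R lam b)) := hbal a lam _
      _ = p₀ lam (Lr K R lam (a * b)) := by rw [h2]
      _ = p₀ lam (Ll K R lam (ν (a * b))) := by rw [hLlνF]
      _ = e₀ * ν (a * b) := hright lam lam _
  have hLl1 : Ll K R lam 1 = lam := by ext r; simp
  -- the relation `a * e₀ = e₀ * ν (ν a)`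
  have hstar : ∀ a : R, a * e₀ = e₀ * ν (ν a) := by
    intro a
    have h1 : p₀ (Lr K R lam a) (Lr K R lam 1) = a * p₀ lam (Lr K R lam 1) := hleft a lam _
    have h2 : p₀ lam (Lr K R lam 1) = e₀ * ν 1 := by
      have := hP 1 1
      rw [hLl1, one_mul] at this
      exact this
    have h3 : p₀ (Lr K R lam a) (Lr K R lam 1) = e₀ * ν (ν a * 1) := by
      rw [← hLlνF a]
      exact hP (ν a) 1
    rw [h3] at h1
    rw [h2, νone, mul_one, mul_one] at h1
    exact h1.symm
  -- extensionality from the uniqueness part of the universal property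
  have hext : ∀ (M : Type) [AddCommGroup M] [Module K M] (φ ψ : R →ₗ[K] M),
      (∀ f g, φ (p₀ f g) = ψ (p₀ f g)) → φ = ψ := by
    intro M _ _ φ ψ hfg
    set b : Module.Dual K R →ₗ[K] Module.Dual K R →ₗ[K] M := p₀.compr₂ φ with hb
    have hbb : ∀ f g, b f g = φ (p₀ f g) := fun f g => rfl
    have hbalb : ∀ (r : R) (f g : Module.Dual K R),
        b ((LinearMap.mulLeft K r).dualMap f) g = b f ((LinearMap.mulRight K r).dualMap g) := by
      intro r f g
      rw [hbb, hbb, hbal]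
    obtain ⟨h0, h0p, h0u⟩ := huniv M b hbalb
    have e1 : φ = h0 := h0u φ hbb
    have e2 : ψ = h0 := h0u ψ (fun f g => (hbb f g).trans (hfg f g))
    rw [e1, e2]
  -- left multiplication by e₀ is surjective, hence injective
  have hmulsurj : Function.Surjective (LinearMap.mulLeft K e₀) := by
    set S := LinearMap.range (LinearMap.mulLeft K e₀) with hSdef
    have hS : ∀ f g, p₀ f g ∈ S := by
      intro f g
      obtain ⟨a, ha⟩ := hLlbij.2 f
      obtain ⟨b, hb⟩ := hLrbij.2 g
      refine ⟨ν (a * b), ?_⟩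
      show e₀ * ν (a * b) = p₀ f g
      rw [← ha, ← hb, hP]
    have hq : S.mkQ = (0 : R →ₗ[K] R ⧸ S) := by
      apply hext
      intro f g
      simp only [LinearMap.zero_apply, Submodule.mkQ_apply, Submodule.Quotient.mk_eq_zero]
      exact hS f g
    intro x
    have hx : x ∈ S := by
      have := LinearMap.congr_fun hq x
      rwa [Submodule.mkQ_apply, LinearMap.zero_apply, Submodule.Quotient.mk_eq_zero] at this
    exact hx
  have hmulinj : Function.Injective (LinearMap.mulLeft K e₀) :=
    LinearMap.injective_iff_surjective.mpr hmulsurj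
  have hcancel : ∀ x y : R, e₀ * x = e₀ * y → x = y := by
    intro x y hxy
    have : (LinearMap.mulLeft K e₀) x = (LinearMap.mulLeft K e₀) y := by simpa using hxy
    exact hmulinj this
  have hν2e₀ : ν (ν e₀) = e₀ := by
    apply hcancel
    exact (hstar e₀).symm
  have hνe₀ : ν e₀ = e₀ := by
    apply llinj
    intro r
    calc lam (ν e₀ * r) = lam (r * e₀) := hLlν e₀ r
      _ = lam (e₀ * ν (ν r)) := by rw [hstar r]
      _ = lam (ν (ν e₀) * ν (ν r)) := by rw [hν2e₀]
      _ = lam (ν (ν (e₀ * r))) := by rw [νmul, νmul]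
      _ = lam (e₀ * r) := by rw [lamν, lamν]
  -- the main associativity identity
  have main : ∀ (f g h : Module.Dual K R) (s : R), h (s * p₀ f g) = f (p₀ g h * s) := by
    intro f g h s
    obtain ⟨a, ha⟩ := hLlbij.2 f
    obtain ⟨b, hb⟩ := hLlbij.2 g
    obtain ⟨c, hc⟩ := hLlbij.2 h
    obtain ⟨b', hb'⟩ := νsurj b
    obtain ⟨c', hc'⟩ := νsurj c
    have pfg : p₀ f g = e₀ * (ν a * b) := by
      rw [← ha, ← hb, ← hb', hLlνF b', hP a b', νmul]
    have pgh : p₀ g h = e₀ * (ν b * c) := by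
      rw [← hb, ← hc, ← hc', hLlνF c', hP b c', νmul]
    rw [pfg, pgh, ← ha, ← hc]
    show lam (c * (s * (e₀ * (ν a * b)))) = lam (a * (e₀ * (ν b * c) * s))
    calc lam (c * (s * (e₀ * (ν a * b))))
        = lam ((c * s * e₀ * ν a) * b) := congrArg lam (by simp only [mul_assoc])
      _ = lam (ν b * (c * s * e₀ * ν a)) := N _ _
      _ = lam ((ν b * c * s * e₀) * ν a) := congrArg lam (by simp only [mul_assoc])
      _ = lam (ν (ν a) * (ν b * c * s * e₀)) := N _ _
      _ = lam ((ν (ν a) * (ν b * c) * s) * e₀) := congrArg lam (by simp only [mul_assoc])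
      _ = lam (ν e₀ * (ν (ν a) * (ν b * c) * s)) := N _ _
      _ = lam (e₀ * (ν (ν a) * (ν b * c) * s)) := by rw [hνe₀]
      _ = lam ((e₀ * ν (ν a)) * ((ν b * c) * s)) := congrArg lam (by simp only [mul_assoc])
      _ = lam ((a * e₀) * ((ν b * c) * s)) := by rw [← hstar a]
      _ = lam (a * (e₀ * (ν b * c) * s)) := congrArg lam (by simp only [mul_assoc])
  refine ⟨main, ?_⟩
  intro e _ hel her f g h s
  have hL : ∀ r : R, e ∘ₗ LinearMap.mulLeft K r = LinearMap.mulLeft K r ∘ₗ e := by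
    intro r
    apply hext
    intro f g
    simpa using hel r f g
  have hR : ∀ r : R, e ∘ₗ LinearMap.mulRight K r = LinearMap.mulRight K r ∘ₗ e := by
    intro r
    apply hext
    intro f g
    simpa using her f g r
  set u := e 1 with hu
  have heL : ∀ x : R, e x = x * u := by
    intro x
    have := LinearMap.congr_fun (hL x) 1
    simpa using this
  have heR : ∀ x : R, e x = u * x := by
    intro x
    have := LinearMap.congr_fun (hR x) 1
    simpa using this
  have hucomm : ∀ x : R, u * x = x * u := fun x => (heR x).symm.trans (heL x)
  have l1 : s * e (p₀ f g) = (s * u) * p₀ f g := by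
    rw [heR]
    simp only [mul_assoc]
  have l2 : e (p₀ g h) * s = p₀ g h * (s * u) := by
    rw [heL, mul_assoc, hucomm]
  rw [l1, l2]
  exact main f g h (s * u)
end
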